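/- Let a : ℕ → ℝ be a function supported on primes p ≤ X with |a(p)| ≤ A for all p, and let V(t) = Σ_{p ≤ X} a(p) p^{−1/2} p^{it}. Then for any real T, H > 0 and nonnegative integers ν ≠ μ, the off-diagonal bound holds: |∫_T^{T+H} V(t)^ν · conj(V(t))^μ dt| ≤ 4·A^{ν+μ}·(S^ν C^μ + S^μ C^ν), where S = Σ_{p ≤ X} p^{1/2} and C = Σ_{p ≤ X} p^{−1/2}. -/

import Mathlib

open Complex Finset

private lemma omega_prod : ∀ {n : ℕ} (g : Fin n → ℕ), (∀ i, (g i).Prime) →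
    ArithmeticFunction.cardFactors (∏ i, g i) = n := by
  intro n
  induction n with
  | zero => intro g hg; simp
  | succ m ih =>
    intro g hg
    rw [Fin.prod_univ_succ,
      ArithmeticFunction.cardFactors_mul (hg 0).ne_zero
        (Finset.prod_ne_zero_iff.mpr fun i _ => (hg i.succ).ne_zero),
      ArithmeticFunction.cardFactors_apply_prime (hg 0),
      ih _ (fun i => hg i.succ)]
    omega

private lemma log_gap_aux {m n : ℕ} (hm : 1 ≤ m) (hmn : m < n) :
    1 / (2 * (m : ℝ)) ≤ Real.log n - Real.log m := by
  have hm0 : (0:ℝ) < m := by exact_mod_cast hm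
  have hn0 : (0:ℝ) < n := by exact_mod_cast hm.trans hmn.le
  have h1 : Real.log ((m:ℝ)/n) ≤ (m:ℝ)/n - 1 :=
    Real.log_le_sub_one_of_pos (by positivity)
  rw [Real.log_div hm0.ne' hn0.ne'] at h1
  have hmn' : (m:ℝ) + 1 ≤ n := by exact_mod_cast hmn
  have hm1 : (1:ℝ) ≤ m := by exact_mod_cast hm
  have h2 : (m:ℝ)/n ≤ m/(m+1) := by gcongr
  have h3 : (1:ℝ) - (m:ℝ)/((m:ℝ)+1) = 1/((m:ℝ)+1) := by field_simp; ring
  have h4 : 1/(2*(m:ℝ)) ≤ 1/((m:ℝ)+1) := by gcongr <;> linarith [hm1]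
  linarith

private lemma log_gap {P Q : ℕ} (hP : 1 ≤ P) (hQ : 1 ≤ Q) (hne : P ≠ Q) :
    1 / (2 * (P : ℝ)) ≤ |Real.log P - Real.log Q| := by
  have hpos : (0:ℝ) < 1 / (2 * (P:ℝ)) := by positivity
  rcases lt_or_gt_of_ne hne with h | h
  · have h1 := log_gap_aux hP h
    rw [abs_sub_comm]
    rw [_root_.abs_of_nonneg (by linarith : (0:ℝ) ≤ Real.log Q - Real.log P)]
    linarith
  · have h1 := log_gap_aux hQ h
    have hQ1 : (1:ℝ) ≤ Q := by exact_mod_cast hQ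
    have hPQ : (Q:ℝ) ≤ P := by exact_mod_cast h.le
    have h2 : 1/(2*(P:ℝ)) ≤ 1/(2*(Q:ℝ)) := by gcongr
    have hq2 : (0:ℝ) < 1/(2*(Q:ℝ)) := by positivity
    rw [_root_.abs_of_nonneg (by linarith : (0:ℝ) ≤ Real.log P - Real.log Q)]
    linarith

private lemma exp_int_bound {θ : ℝ} (hθ : θ ≠ 0) (T H : ℝ) :
    ‖∫ t in T..(T+H), Complex.exp (I * t * θ)‖ ≤ 2 / |θ| := by
  have hc : (I * (θ:ℂ)) ≠ 0 := mul_ne_zero I_ne_zero (Complex.ofReal_ne_zero.mpr hθ)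
  have hre : ∀ x : ℝ, ‖Complex.exp (I * (θ:ℂ) * (x:ℂ))‖ = 1 := by
    intro x
    rw [Complex.norm_exp]
    have : (I * (θ:ℂ) * (x:ℂ)).re = 0 := by simp
    rw [this, Real.exp_zero]
  have h1 : (∫ t in T..(T+H), Complex.exp (I * t * θ))
      = ∫ t in T..(T+H), Complex.exp ((I * (θ:ℂ)) * t) := by
    congr 1; funext t; ring_nf
  rw [h1, integral_exp_mul_complex hc, norm_div]
  have hden : ‖I * (θ:ℂ)‖ = |θ| := by
    rw [norm_mul, Complex.norm_I, one_mul, Complex.norm_real, Real.norm_eq_abs]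
  rw [hden]
  have hnum : ‖Complex.exp (I * (θ:ℂ) * ((T+H:ℝ):ℂ)) - Complex.exp (I * (θ:ℂ) * (T:ℂ))‖ ≤ 2 := by
    calc ‖_ - _‖ ≤ ‖Complex.exp (I * (θ:ℂ) * ((T+H:ℝ):ℂ))‖ + ‖Complex.exp (I * (θ:ℂ) * (T:ℂ))‖ :=
          norm_sub_le _ _
      _ ≤ 2 := by rw [hre, hre]; norm_num
  have hpos : (0:ℝ) < |θ| := abs_pos.mpr hθ
  gcongr

private lemma pow_expand (b : ℕ → ℂ) (L : ℕ → ℂ) (s : Finset ℕ) (n : ℕ) :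
    (∑ p ∈ s, b p * Complex.exp (L p)) ^ n
      = ∑ g ∈ Fintype.piFinset (fun _ : Fin n => s),
          (∏ i, b (g i)) * Complex.exp (∑ i, L (g i)) := by
  rw [← Fin.prod_const n (∑ p ∈ s, b p * Complex.exp (L p)), Finset.prod_univ_sum]
  exact Finset.sum_congr rfl fun g _ => by rw [Finset.prod_mul_distrib, Complex.exp_sum]

private lemma sum_piFinset_prod (s : Finset ℕ) (F : ℕ → ℝ) (n : ℕ) :
    ∑ g ∈ Fintype.piFinset (fun _ : Fin n => s), ∏ i, F (g i) = (∑ p ∈ s, F p) ^ n := by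
  rw [← Finset.prod_univ_sum]
  simp

theorem off_diagonal_bound (X : ℕ) (a : ℕ → ℝ) (A T H : ℝ) (ν μ : ℕ)
    (hA : ∀ p, |a p| ≤ A)
    (hsupp : ∀ p, ¬(Nat.Prime p ∧ p ≤ X) → a p = 0)
    (hH : 0 < H) (hνμ : ν ≠ μ)
    (V : ℝ → ℂ)
    (hV : ∀ t, V t = ∑ p ∈ (Finset.Iic X).filter Nat.Prime,
        (a p : ℂ) / Real.sqrt p * Complex.exp (Complex.I * t * Real.log p)) :
    ‖∫ t in T..(T + H), V t ^ ν * (starRingEnd ℂ) (V t) ^ μ‖ ≤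
      4 * A ^ (ν + μ) *
        ((∑ p ∈ (Finset.Iic X).filter Nat.Prime, Real.sqrt p) ^ ν *
           (∑ p ∈ (Finset.Iic X).filter Nat.Prime, 1 / Real.sqrt p) ^ μ +
         (∑ p ∈ (Finset.Iic X).filter Nat.Prime, Real.sqrt p) ^ μ *
           (∑ p ∈ (Finset.Iic X).filter Nat.Prime, 1 / Real.sqrt p) ^ ν) := by
  classical
  have hA0 : 0 ≤ A := (abs_nonneg (a 0)).trans (hA 0)
  set Ps : Finset ℕ := (Finset.Iic X).filter Nat.Prime with hPsdef
  have hPp : ∀ p ∈ Ps, Nat.Prime p := fun p hp => (Finset.mem_filter.1 hp).2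
  set Gν := Fintype.piFinset (fun _ : Fin ν => Ps) with hGν
  set Gμ := Fintype.piFinset (fun _ : Fin μ => Ps) with hGμ
  -- expand the integrand
  have hint : ∀ t : ℝ, V t ^ ν * (starRingEnd ℂ) (V t) ^ μ =
      ∑ g ∈ Gν, ∑ h ∈ Gμ,
        ((∏ i, ((a (g i):ℂ)/(Real.sqrt (g i) : ℝ))) * (∏ j, ((a (h j):ℂ)/(Real.sqrt (h j) : ℝ)))) *
          Complex.exp (I * t * (((∑ i, Real.log (g i)) - ∑ j, Real.log (h j) : ℝ) : ℂ)) := by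
    intro t
    rw [hV t]
    have hconj : (starRingEnd ℂ)
        (∑ p ∈ Ps, (a p : ℂ) / Real.sqrt p * Complex.exp (I * t * Real.log p))
        = ∑ p ∈ Ps, (a p : ℂ) / Real.sqrt p * Complex.exp (-(I * t * Real.log p)) := by
      rw [map_sum]
      refine Finset.sum_congr rfl fun p _ => ?_
      rw [map_mul, map_div₀, Complex.conj_ofReal, Complex.conj_ofReal, ← Complex.exp_conj]
      congr 1
      rw [map_mul, map_mul, Complex.conj_I, Complex.conj_ofReal, Complex.conj_ofReal]
      ring
    rw [hconj,
      pow_expand (fun p => (a p : ℂ)/(Real.sqrt p : ℝ)) (fun p => I * t * (Real.log p : ℝ)) Ps ν,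
      pow_expand (fun p => (a p : ℂ)/(Real.sqrt p : ℝ)) (fun p => -(I * t * (Real.log p : ℝ))) Ps μ,
      Finset.sum_mul_sum]
    refine Finset.sum_congr rfl fun g _ => Finset.sum_congr rfl fun h _ => ?_
    rw [mul_mul_mul_comm, ← Complex.exp_add]
    congr 1
    push_cast
    rw [mul_sub, Finset.mul_sum, Finset.mul_sum]
    simp only [sub_eq_add_neg, ← Finset.sum_neg_distrib]
  -- continuity / integrability
  have hcont : ∀ (C : ℂ) (θ : ℝ), Continuous (fun t : ℝ => C * Complex.exp (I * t * θ)) := by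
    intro C θ
    exact continuous_const.mul (Complex.continuous_exp.comp
      (((continuous_const.mul Complex.continuous_ofReal).mul continuous_const)))
  -- rewrite the integral
  have hIeq : (∫ t in T..(T+H), V t ^ ν * (starRingEnd ℂ) (V t) ^ μ)
      = ∑ g ∈ Gν, ∑ h ∈ Gμ,
          ((∏ i, ((a (g i):ℂ)/(Real.sqrt (g i) : ℝ))) * (∏ j, ((a (h j):ℂ)/(Real.sqrt (h j) : ℝ)))) *
            ∫ t in T..(T+H),
              Complex.exp (I * t * (((∑ i, Real.log (g i)) - ∑ j, Real.log (h j) : ℝ) : ℂ)) := by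
    simp_rw [hint]
    rw [intervalIntegral.integral_finset_sum (fun g _ =>
      (Continuous.intervalIntegrable (continuous_finset_sum _ (fun h _ => hcont _ _)) _ _))]
    refine Finset.sum_congr rfl fun g _ => ?_
    rw [intervalIntegral.integral_finset_sum (fun h _ =>
      Continuous.intervalIntegrable (hcont _ _) _ _)]
    exact Finset.sum_congr rfl fun h _ => intervalIntegral.integral_const_mul _ _
  rw [hIeq]
  -- per-term bound
  have key : ∀ g ∈ Gν, ∀ h ∈ Gμ,
      ‖((∏ i, ((a (g i):ℂ)/(Real.sqrt (g i) : ℝ))) * (∏ j, ((a (h j):ℂ)/(Real.sqrt (h j) : ℝ)))) *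
          ∫ t in T..(T+H),
            Complex.exp (I * t * (((∑ i, Real.log (g i)) - ∑ j, Real.log (h j) : ℝ) : ℂ))‖ ≤
        4 * ((∏ i, (A * Real.sqrt (g i))) * (∏ j, (A * (1 / Real.sqrt (h j))))) := by
    intro g hg h hh
    have hgp : ∀ i, (g i).Prime := fun i => hPp _ ((Fintype.mem_piFinset.1 hg) i)
    have hhp : ∀ j, (h j).Prime := fun j => hPp _ ((Fintype.mem_piFinset.1 hh) j)
    set Pg : ℕ := ∏ i, g i with hPgdef
    set Qh : ℕ := ∏ j, h j with hQhdef
    have hPg1 : 1 ≤ Pg := Finset.one_le_prod' fun i _ => (hgp i).one_lt.le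
    have hQh1 : 1 ≤ Qh := Finset.one_le_prod' fun j _ => (hhp j).one_lt.le
    have hne : Pg ≠ Qh := by
      intro e
      exact hνμ ((omega_prod g hgp).symm.trans (by rw [← hPgdef, e, hQhdef, omega_prod h hhp]))
    have hlg : (∑ i, Real.log (g i)) = Real.log Pg := by
      rw [hPgdef, Nat.cast_prod, Real.log_prod (fun i _ => by
        exact_mod_cast (hgp i).ne_zero)]
    have hlh : (∑ j, Real.log (h j)) = Real.log Qh := by
      rw [hQhdef, Nat.cast_prod, Real.log_prod (fun j _ => by
        exact_mod_cast (hhp j).ne_zero)]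
    set θ : ℝ := (∑ i, Real.log (g i)) - ∑ j, Real.log (h j) with hθdef
    have hθeq : θ = Real.log Pg - Real.log Qh := by rw [hθdef, hlg, hlh]
    have hθne : θ ≠ 0 := by
      rw [hθeq, sub_ne_zero]
      intro e
      apply hne
      have hPpos : (0:ℝ) < Pg := by exact_mod_cast hPg1
      have hQpos : (0:ℝ) < Qh := by exact_mod_cast hQh1
      have : ((Pg:ℝ)) = Qh := by
        rw [← Real.exp_log hPpos, ← Real.exp_log hQpos, e]
      exact_mod_cast this
    have hlb : 1 / (2 * (Pg : ℝ)) ≤ |θ| := by rw [hθeq]; exact log_gap hPg1 hQh1 hne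
    have hPgpos : (0:ℝ) < Pg := by exact_mod_cast hPg1
    have hIbd : ‖∫ t in T..(T+H), Complex.exp (I * t * (θ:ℂ))‖ ≤ 4 * (Pg:ℝ) := by
      refine (exp_int_bound hθne T H).trans ?_
      have h2 : 2 / |θ| ≤ 2 / (1 / (2 * (Pg:ℝ))) := by gcongr
      refine h2.trans_eq ?_
      field_simp
      ring
    have hcgbd : ‖∏ i, ((a (g i):ℂ)/(Real.sqrt (g i) : ℝ))‖ ≤ ∏ i, (A / Real.sqrt (g i)) := by
      rw [norm_prod]
      refine Finset.prod_le_prod (fun i _ => norm_nonneg _) fun i _ => ?_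
      rw [norm_div, Complex.norm_real, Complex.norm_real, Real.norm_eq_abs, Real.norm_eq_abs,
        _root_.abs_of_nonneg (Real.sqrt_nonneg _)]
      gcongr
      exact hA _
    have hchbd : ‖∏ j, ((a (h j):ℂ)/(Real.sqrt (h j) : ℝ))‖ ≤ ∏ j, (A / Real.sqrt (h j)) := by
      rw [norm_prod]
      refine Finset.prod_le_prod (fun j _ => norm_nonneg _) fun j _ => ?_
      rw [norm_div, Complex.norm_real, Complex.norm_real, Real.norm_eq_abs, Real.norm_eq_abs,
        _root_.abs_of_nonneg (Real.sqrt_nonneg _)]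
      gcongr
      exact hA _
    have hprod_eq : (∏ i, (A / Real.sqrt (g i))) * (Pg:ℝ) = ∏ i, (A * Real.sqrt (g i)) := by
      rw [hPgdef, Nat.cast_prod, ← Finset.prod_mul_distrib]
      refine Finset.prod_congr rfl fun i _ => ?_
      rw [div_mul_eq_mul_div, mul_div_assoc, Real.div_sqrt]
    have hch_eq : (∏ j, (A / Real.sqrt (h j))) = ∏ j, (A * (1 / Real.sqrt (h j))) := by
      refine Finset.prod_congr rfl fun j _ => ?_
      rw [mul_one_div]
    have hnn1 : (0:ℝ) ≤ ∏ i, (A / Real.sqrt (g i)) :=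
      Finset.prod_nonneg fun i _ => div_nonneg hA0 (Real.sqrt_nonneg _)
    have hnn2 : (0:ℝ) ≤ ∏ j, (A / Real.sqrt (h j)) :=
      Finset.prod_nonneg fun j _ => div_nonneg hA0 (Real.sqrt_nonneg _)
    rw [norm_mul, norm_mul]
    calc ‖∏ i, ((a (g i):ℂ)/(Real.sqrt (g i) : ℝ))‖ * ‖∏ j, ((a (h j):ℂ)/(Real.sqrt (h j) : ℝ))‖ *
          ‖∫ t in T..(T+H), Complex.exp (I * t * (θ:ℂ))‖
        ≤ (∏ i, (A / Real.sqrt (g i))) * (∏ j, (A / Real.sqrt (h j))) * (4 * (Pg:ℝ)) := by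
          gcongr
      _ = 4 * ((∏ i, (A * Real.sqrt (g i))) * (∏ j, (A * (1 / Real.sqrt (h j))))) := by
          rw [← hprod_eq, ← hch_eq]; ring
  -- sum up
  have hsum : (∑ g ∈ Gν, ∑ h ∈ Gμ,
      4 * ((∏ i, (A * Real.sqrt (g i))) * (∏ j, (A * (1 / Real.sqrt (h j))))))
      = 4 * (A ^ (ν + μ) * ((∑ p ∈ Ps, Real.sqrt p) ^ ν * (∑ p ∈ Ps, 1 / Real.sqrt p) ^ μ)) := by
    simp_rw [← Finset.mul_sum, ← Finset.sum_mul]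
    rw [sum_piFinset_prod Ps (fun p => A * Real.sqrt p) ν,
      sum_piFinset_prod Ps (fun p => A * (1 / Real.sqrt p)) μ,
      ← Finset.mul_sum, ← Finset.mul_sum, mul_pow, mul_pow, pow_add]
    ring
  have hS0 : (0:ℝ) ≤ ∑ p ∈ Ps, Real.sqrt p := Finset.sum_nonneg fun p _ => Real.sqrt_nonneg _
  have hC0 : (0:ℝ) ≤ ∑ p ∈ Ps, 1 / Real.sqrt p :=
    Finset.sum_nonneg fun p _ => by positivity
  calc ‖∑ g ∈ Gν, ∑ h ∈ Gμ, _‖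
      ≤ ∑ g ∈ Gν, ‖∑ h ∈ Gμ, _‖ := norm_sum_le _ _
    _ ≤ ∑ g ∈ Gν, ∑ h ∈ Gμ, ‖_‖ := Finset.sum_le_sum fun g _ => norm_sum_le _ _
    _ ≤ ∑ g ∈ Gν, ∑ h ∈ Gμ,
        4 * ((∏ i, (A * Real.sqrt (g i))) * (∏ j, (A * (1 / Real.sqrt (h j))))) :=
        Finset.sum_le_sum fun g hg => Finset.sum_le_sum fun h hh => key g hg h hh
    _ = 4 * (A ^ (ν + μ) * ((∑ p ∈ Ps, Real.sqrt p) ^ ν * (∑ p ∈ Ps, 1 / Real.sqrt p) ^ μ)) := hsum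
    _ ≤ 4 * A ^ (ν + μ) *
        ((∑ p ∈ Ps, Real.sqrt p) ^ ν * (∑ p ∈ Ps, 1 / Real.sqrt p) ^ μ +
         (∑ p ∈ Ps, Real.sqrt p) ^ μ * (∑ p ∈ Ps, 1 / Real.sqrt p) ^ ν) := by
        have h1 : (0:ℝ) ≤ (∑ p ∈ Ps, Real.sqrt p) ^ μ * (∑ p ∈ Ps, 1 / Real.sqrt p) ^ ν := by
          positivity
        have h2 : (0:ℝ) ≤ 4 * A ^ (ν + μ) := by positivity
        nlinarith
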